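/- Fix r ≥ 2. For any partition λ, the number of cells of color i in the skew diagram λ/core_r(λ) is independent of i ∈ ℤ/rℤ, and equals the total size |quot_r(λ)| of the r-quotient of λ. -/

import Mathlib

/-- Two cells are (edge-)adjacent. -/
def Adj (a b : ℕ × ℕ) : Prop :=
  (a.1 = b.1 ∧ (a.2 + 1 = b.2 ∨ b.2 + 1 = a.2)) ∨
  (a.2 = b.2 ∧ (a.1 + 1 = b.1 ∨ b.1 + 1 = a.1))

/-- A set of cells is connected (any two cells are joined by a path of
edge-adjacent cells inside the set). -/
def ConnectedCells (s : Set (ℕ × ℕ)) : Prop :=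
  ∀ x ∈ s, ∀ y ∈ s, Relation.ReflTransGen (fun a b => Adj a b ∧ a ∈ s ∧ b ∈ s) x y

/-- `ν` is obtained from `μ` by removing a ribbon (rim hook) of length `r`:
the skew shape `μ/ν` has `r` cells, is connected, and contains no 2×2 square. -/
def IsRibbonOf (r : ℕ) (μ ν : YoungDiagram) : Prop :=
  ν.cells ⊆ μ.cells ∧ (μ.cells \ ν.cells).card = r ∧
  ConnectedCells ((μ.cells : Set (ℕ × ℕ)) \ (ν.cells : Set (ℕ × ℕ))) ∧
  ∀ i j : ℕ, ¬ ((i, j) ∈ μ.cells \ ν.cells ∧ (i + 1, j) ∈ μ.cells \ ν.cells ∧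
      (i, j + 1) ∈ μ.cells \ ν.cells ∧ (i + 1, j + 1) ∈ μ.cells \ ν.cells)

/-- An `r`-core is a partition with no removable ribbon of length `r`. -/
def IsRCore (r : ℕ) (μ : YoungDiagram) : Prop := ∀ ν, ¬ IsRibbonOf r μ ν

/-- The beta-set of a partition. -/
def betaSet (μ : YoungDiagram) : Set ℤ :=
  {n | ∃ i : ℕ, n = (μ.rowLen i : ℤ) - (i + 1)}

/-- `ν` is the `r`-core of `μ`: it is reached from `μ` by successively
removing `r`-ribbons, and has no `r`-ribbon left. -/
def ReachesCore (r : ℕ) (μ ν : YoungDiagram) : Prop :=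
  Relation.ReflTransGen (fun a b => IsRibbonOf r a b) μ ν ∧ IsRCore r ν

/-- The total size `|quot_r(μ)|` of the `r`-quotient of `μ`, read off from the
Maya diagram: it is the number of pairs `(s, t)` with `s` in the beta-set,
`t` not in the beta-set, `t < s` and `s ≡ t (mod r)`. -/
noncomputable def quotTotal (r : ℕ) (μ : YoungDiagram) : ℕ :=
  {p : ℤ × ℤ | p.1 ∈ betaSet μ ∧ p.2 ∉ betaSet μ ∧ p.2 < p.1 ∧
    (r : ℤ) ∣ (p.1 - p.2)}.ncard

/-- The color of a cell `(row, column)`: its content `row - column` mod `r`. -/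
def cellColor (r : ℕ) (c : ℕ × ℕ) : ZMod r := (((c.1 : ℤ) - (c.2 : ℤ) : ℤ) : ZMod r)

namespace RibbonAux

/-! ### Integer divisibility helpers -/

lemma dvd_small {r e : ℤ} (hr : 0 < r) (h : r ∣ e) (h1 : -r < e) (h2 : e < r) : e = 0 := by
  rcases h with ⟨k, rfl⟩
  rcases lt_trichotomy k 0 with hk | hk | hk
  · nlinarith
  · simp [hk]
  · nlinarith

/-! ### Beta numbers -/

def beta (μ : YoungDiagram) (i : ℕ) : ℤ := (μ.rowLen i : ℤ) - (i + 1)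

lemma beta_strictAnti (μ : YoungDiagram) : StrictAnti (beta μ) := by
  apply strictAnti_nat_of_succ_lt
  intro i
  have := μ.rowLen_anti i (i + 1) (by omega)
  unfold beta
  push_cast
  omega

lemma mem_betaSet {μ : YoungDiagram} {n : ℤ} : n ∈ betaSet μ ↔ ∃ i, n = beta μ i := Iff.rfl

lemma beta_mem (μ : YoungDiagram) (i : ℕ) : beta μ i ∈ betaSet μ := ⟨i, rfl⟩

lemma rowLen_zero_of_ge {μ : YoungDiagram} {i : ℕ} (h : μ.colLen 0 ≤ i) : μ.rowLen i = 0 := by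
  by_contra hne
  have : (i, 0) ∈ μ := YoungDiagram.mem_iff_lt_rowLen.mpr (by omega)
  have := YoungDiagram.mem_iff_lt_colLen.mp this
  omega

lemma low_mem_betaSet {μ : YoungDiagram} {n : ℤ} (h : n ≤ -(μ.colLen 0 : ℤ) - 1) :
    n ∈ betaSet μ := by
  refine ⟨(-n - 1).toNat, ?_⟩
  have h0 : (0 : ℤ) ≤ -n - 1 := by
    have : (0:ℤ) ≤ (μ.colLen 0 : ℤ) := by positivity
    omega
  have hi : ((-n - 1).toNat : ℤ) = -n - 1 := Int.toNat_of_nonneg h0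
  have : μ.colLen 0 ≤ (-n - 1).toNat := by omega
  rw [rowLen_zero_of_ge this]
  omega

lemma betaSet_lt {μ : YoungDiagram} {n : ℤ} (h : n ∈ betaSet μ) : n ≤ (μ.rowLen 0 : ℤ) := by
  obtain ⟨i, rfl⟩ := h
  have := μ.rowLen_anti 0 i (by omega)
  show (μ.rowLen i : ℤ) - (i + 1) ≤ _
  push_cast
  omega

/-! ### The pair set and its finiteness -/

def Qset (r : ℕ) (B : Set ℤ) : Set (ℤ × ℤ) :=
  {p | p.1 ∈ B ∧ p.2 ∉ B ∧ p.2 < p.1 ∧ (r : ℤ) ∣ (p.1 - p.2)}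

lemma quotTotal_eq (r : ℕ) (μ : YoungDiagram) : quotTotal r μ = (Qset r (betaSet μ)).ncard := rfl

lemma Qset_finite (r : ℕ) (μ : YoungDiagram) : (Qset r (betaSet μ)).Finite := by
  apply Set.Finite.subset ((Set.finite_Icc (-(μ.colLen 0 : ℤ) - 1) (μ.rowLen 0)).prod
    (Set.finite_Icc (-(μ.colLen 0 : ℤ) - 1) (μ.rowLen 0)))
  rintro ⟨x, y⟩ ⟨hx, hy, hlt, -⟩
  have h1 := betaSet_lt hx
  have h2 : ¬ (y ≤ -(μ.colLen 0 : ℤ) - 1) := fun hc => hy (low_mem_betaSet hc)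
  exact ⟨⟨by omega, h1⟩, ⟨by omega, by omega⟩⟩

lemma mem_Qset {r : ℕ} {B : Set ℤ} {x y : ℤ} :
    (x, y) ∈ Qset r B ↔ x ∈ B ∧ y ∉ B ∧ y < x ∧ (r : ℤ) ∣ (x - y) := Iff.rfl

section
variable {r : ℕ} {B : Set ℤ} {s : ℤ}

private def ff (r : ℕ) (s : ℤ) (p : ℤ × ℤ) : ℤ × ℤ :=
  if p.1 = s then (s - r, p.2) else if p.2 = s - r then (p.1, s) else p

private def gg (r : ℕ) (s : ℤ) (p : ℤ × ℤ) : ℤ × ℤ :=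
  if p.1 = s - r then (s, p.2) else if p.2 = s then (p.1, s - r) else p

lemma Qstep (hr : 1 ≤ r) (hs : s ∈ B) (hs' : s - r ∉ B)
    (hfin : (Qset r B).Finite) :
    (Qset r B).ncard = (Qset r (insert (s - (r:ℤ)) (B \ {s}))).ncard + 1 := by
  have hr0 : (0:ℤ) < r := by exact_mod_cast hr
  have hmem : (s, s - (r:ℤ)) ∈ Qset r B := ⟨hs, hs', by omega, ⟨1, by ring⟩⟩
  have hmf : Set.MapsTo (ff r s) (Qset r B \ {(s, s - (r:ℤ))})
      (Qset r (insert (s - (r:ℤ)) (B \ {s}))) := by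
    rintro ⟨x, y⟩ ⟨hp, hne⟩
    rw [mem_Qset] at hp
    obtain ⟨hx, hy, hxy, hdvd⟩ := hp
    simp only [Set.mem_singleton_iff, Prod.mk.injEq, not_and] at hne
    by_cases h1 : x = s
    · have hys : y ≠ s - r := hne h1
      simp only [ff, if_pos h1]
      rw [mem_Qset]
      have hle : (r:ℤ) ≤ x - y := Int.le_of_dvd (by omega) hdvd
      have hlt : y < s - r := by
        by_contra hc
        have : x - y = r := by omega
        omega
      refine ⟨Set.mem_insert _ _, ?_, hlt, ?_⟩
      · rintro (h | ⟨hyB, -⟩)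
        · exact hys h
        · exact hy hyB
      · have he : s - r - y = (x - y) - r := by rw [h1]; ring
        rw [he]
        exact dvd_sub hdvd ⟨1, by ring⟩
    · by_cases h2 : y = s - r
      · simp only [ff, if_neg h1, if_pos h2]
        rw [mem_Qset]
        have hdvd2 : (r:ℤ) ∣ x - s := by
          have he : x - s = (x - y) - r := by rw [h2]; ring
          rw [he]
          exact dvd_sub hdvd ⟨1, by ring⟩
        have hxs : s < x := by
          rcases lt_trichotomy x s with h | h | h
          · exfalso
            have := dvd_small hr0 hdvd2 (by omega) (by omega)
            omega
          · exact absurd h h1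
          · exact h
        refine ⟨Set.mem_insert_of_mem _ ⟨hx, h1⟩, ?_, hxs, hdvd2⟩
        rintro (h | ⟨-, hss⟩)
        · omega
        · exact hss rfl
      · simp only [ff, if_neg h1, if_neg h2]
        rw [mem_Qset]
        refine ⟨Set.mem_insert_of_mem _ ⟨hx, h1⟩, ?_, hxy, hdvd⟩
        rintro (h | ⟨hyB, -⟩)
        · exact h2 h
        · exact hy hyB
  have hmg : Set.MapsTo (gg r s) (Qset r (insert (s - (r:ℤ)) (B \ {s})))
      (Qset r B \ {(s, s - (r:ℤ))}) := by
    rintro ⟨x, y⟩ hp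
    rw [mem_Qset] at hp
    obtain ⟨hx, hy, hxy, hdvd⟩ := hp
    by_cases h1 : x = s - r
    · simp only [gg, if_pos h1]
      have hys : y ∉ B := by
        intro hyB
        exact hy (Set.mem_insert_of_mem _ ⟨hyB, by intro hc; rw [Set.mem_singleton_iff] at hc; omega⟩)
      constructor
      · rw [mem_Qset]
        refine ⟨hs, hys, by omega, ?_⟩
        have he : s - y = (x - y) + r := by rw [h1]; ring
        rw [he]
        exact dvd_add hdvd ⟨1, by ring⟩
      · simp only [Set.mem_singleton_iff, Prod.mk.injEq, not_and]
        intro _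
        omega
    · by_cases h2 : y = s
      · simp only [gg, if_neg h1, if_pos h2]
        have hxB : x ∈ B ∧ x ≠ s := by
          rcases hx with h | ⟨h, h'⟩
          · exact absurd h h1
          · exact ⟨h, fun hc => h' (by simp [hc])⟩
        have hdvd2 : (r:ℤ) ∣ x - (s - r) := by
          have he : x - (s - r) = (x - y) + r := by rw [h2]; ring
          rw [he]
          exact dvd_add hdvd ⟨1, by ring⟩
        constructor
        · exact mem_Qset.mpr ⟨hxB.1, hs', by omega, hdvd2⟩
        · simp only [Set.mem_singleton_iff, Prod.mk.injEq, not_and]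
          intro hc
          exact absurd hc hxB.2
      · simp only [gg, if_neg h1, if_neg h2]
        have hxB : x ∈ B ∧ x ≠ s := by
          rcases hx with h | ⟨h, h'⟩
          · exact absurd h h1
          · exact ⟨h, fun hc => h' (by simp [hc])⟩
        have hyB : y ∉ B := fun hyB => hy (Set.mem_insert_of_mem _ ⟨hyB, h2⟩)
        constructor
        · exact mem_Qset.mpr ⟨hxB.1, hyB, hxy, hdvd⟩
        · simp only [Set.mem_singleton_iff, Prod.mk.injEq, not_and]
          intro hc
          exact absurd hc hxB.2
  have hinv : Set.InvOn (gg r s) (ff r s) (Qset r B \ {(s, s - (r:ℤ))})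
      (Qset r (insert (s - (r:ℤ)) (B \ {s}))) := by
    constructor
    · rintro ⟨x, y⟩ ⟨hp, hne⟩
      rw [mem_Qset] at hp
      obtain ⟨hx, hy, hxy, hdvd⟩ := hp
      by_cases h1 : x = s
      · simp only [ff, gg, if_pos h1, if_pos rfl, if_true, Prod.mk.injEq]
        simp_all
      · by_cases h2 : y = s - r
        · have hx1 : x ≠ s - r := fun hc => hs' (hc ▸ hx)
          simp only [ff, gg, if_neg h1, if_pos h2, if_neg hx1, if_pos rfl, if_true, Prod.mk.injEq]
          simp_all
        · have hx1 : x ≠ s - r := fun hc => hs' (hc ▸ hx)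
          have hy1 : y ≠ s := fun hc => hy (hc ▸ hs)
          simp only [ff, gg, if_neg h1, if_neg h2, if_neg hx1, if_neg hy1]
    · rintro ⟨x, y⟩ hp
      rw [mem_Qset] at hp
      obtain ⟨hx, hy, hxy, hdvd⟩ := hp
      by_cases h1 : x = s - r
      · simp only [gg, ff, if_pos h1, if_pos rfl, if_true, Prod.mk.injEq]
        simp_all
      · by_cases h2 : y = s
        · have hxs : x ≠ s := by
            rcases hx with h | ⟨-, h'⟩
            · exact absurd h h1
            · exact fun hc => h' (by simp [hc])
          simp only [gg, ff, if_neg h1, if_pos h2, if_neg hxs, if_pos rfl, if_true, Prod.mk.injEq]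
          simp_all
        · have hxs : x ≠ s := by
            rcases hx with h | ⟨-, h'⟩
            · exact absurd h h1
            · exact fun hc => h' (by simp [hc])
          have hy1 : y ≠ s - r := fun hc => hy (hc ▸ Set.mem_insert _ _)
          simp only [gg, ff, if_neg h1, if_neg h2, if_neg hxs, if_neg hy1]
  have hbij := hinv.bijOn hmf hmg
  have h1 : (Qset r (insert (s - (r:ℤ)) (B \ {s}))).ncard
      = (Qset r B \ {(s, s - (r:ℤ))}).ncard := by
    rw [← hbij.image_eq, Set.ncard_image_of_injOn hbij.injOn]
  rw [h1]
  exact (Set.ncard_diff_singleton_add_one hmem hfin).symm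

end


lemma adj_symm {a b : ℕ × ℕ} (h : Adj a b) : Adj b a := by
  unfold Adj at *
  omega

lemma path_cross {S : Set (ℕ × ℕ)} {x y : ℕ × ℕ}
    (h : Relation.ReflTransGen (fun a b => Adj a b ∧ a ∈ S ∧ b ∈ S) x y) :
    ∀ i : ℕ, min x.1 y.1 ≤ i → i < max x.1 y.1 → ∃ j, (i, j) ∈ S ∧ (i + 1, j) ∈ S := by
  induction h with
  | refl => intro i h1 h2; omega
  | @tail z w hxz hstep ih =>
    obtain ⟨hadj, hz, hw⟩ := hstep
    intro i h1 h2
    rcases hadj with ⟨hrow, -⟩ | ⟨hcol, hpm⟩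
    · exact ih i (by omega) (by omega)
    · rcases hpm with hp | hp
      · by_cases hc : min x.1 z.1 ≤ i ∧ i < max x.1 z.1
        · exact ih i hc.1 hc.2
        · have hiz : i = z.1 := by omega
          refine ⟨z.2, ?_, ?_⟩
          · rw [hiz]; simpa using hz
          · have : i + 1 = w.1 := by omega
            rw [this, hcol]; simpa using hw
      · by_cases hc : min x.1 z.1 ≤ i ∧ i < max x.1 z.1
        · exact ih i hc.1 hc.2
        · have hiw : i = w.1 := by omega
          refine ⟨w.2, ?_, ?_⟩
          · rw [hiw]; simpa using hw
          · have : i + 1 = z.1 := by omega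
            rw [this, ← hcol]; simpa using hz

def ct (x : ℕ × ℕ) : ℤ := (x.1 : ℤ) - (x.2 : ℤ)

lemma path_ivt {S : Set (ℕ × ℕ)} {x y : ℕ × ℕ} (hx : x ∈ S)
    (h : Relation.ReflTransGen (fun a b => Adj a b ∧ a ∈ S ∧ b ∈ S) x y) :
    ∀ z : ℤ, min (ct x) (ct y) ≤ z → z ≤ max (ct x) (ct y) → ∃ w ∈ S, ct w = z := by
  induction h with
  | refl => intro z h1 h2; exact ⟨x, hx, by omega⟩
  | @tail z w hxz hstep ih =>
    obtain ⟨hadj, hz, hw⟩ := hstep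
    intro v h1 h2
    have hd : ct w = ct z + 1 ∨ ct z = ct w + 1 := by
      unfold Adj at hadj
      unfold ct
      omega
    by_cases hc : min (ct x) (ct z) ≤ v ∧ v ≤ max (ct x) (ct z)
    · exact ih v hc.1 hc.2
    · have : v = ct w := by omega
      exact ⟨w, hw, this.symm⟩

lemma telescope (f g : ℕ → ℤ) (a b : ℕ) (hab : a ≤ b)
    (h : ∀ i, a ≤ i → i < b → g i = f (i + 1) - 1) :
    ∑ i ∈ Finset.Icc a b, (f i - g i) = f a - g b + (b - a) := by
  induction b, hab using Nat.le_induction with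
  | base => simp
  | succ b hab ih =>
    rw [Finset.sum_Icc_succ_top (by omega)]
    rw [ih (fun i hi hib => h i hi (by omega))]
    have := h b hab (by omega)
    push_cast
    omega

lemma ribbon_beta {r : ℕ} (hr : 1 ≤ r) {μ ν : YoungDiagram} (h : IsRibbonOf r μ ν) :
    ∃ s : ℤ, s ∈ betaSet μ ∧ s - r ∉ betaSet μ ∧
      betaSet ν = insert (s - (r : ℤ)) (betaSet μ \ {s}) := by
  obtain ⟨hsub, hcard, hconn, h2x2⟩ := h
  have hmn : ∀ i, ν.rowLen i ≤ μ.rowLen i := by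
    intro i
    by_contra hc
    have h1 : (i, μ.rowLen i) ∈ ν := YoungDiagram.mem_iff_lt_rowLen.mpr (by omega)
    have h2 : (i, μ.rowLen i) ∈ μ.cells := hsub (by simpa using h1)
    have h3 : (i, μ.rowLen i) ∈ μ := by simpa using h2
    have := YoungDiagram.mem_iff_lt_rowLen.mp h3
    omega
  have hmem_skew : ∀ p : ℕ × ℕ, p ∈ μ.cells \ ν.cells ↔
      ν.rowLen p.1 ≤ p.2 ∧ p.2 < μ.rowLen p.1 := by
    rintro ⟨i, j⟩
    dsimp only
    rw [Finset.mem_sdiff, YoungDiagram.mem_cells, YoungDiagram.mem_cells,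
      YoungDiagram.mem_iff_lt_rowLen, YoungDiagram.mem_iff_lt_rowLen]
    omega
  have hSiff : ∀ p : ℕ × ℕ,
      p ∈ ((μ.cells : Set (ℕ × ℕ)) \ (ν.cells : Set (ℕ × ℕ))) ↔ p ∈ μ.cells \ ν.cells := by
    intro p
    rw [Finset.mem_sdiff]
    exact Iff.rfl
  have hne : (μ.cells \ ν.cells).Nonempty := by
    rw [← Finset.card_pos, hcard]; omega
  have hrne : ((μ.cells \ ν.cells).image Prod.fst).Nonempty := hne.image _
  set rows := (μ.cells \ ν.cells).image Prod.fst with hrows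
  set a := rows.min' hrne with ha
  set b := rows.max' hrne with hb
  have hrowlt : ∀ i ∈ rows, ν.rowLen i < μ.rowLen i := by
    intro i hi
    obtain ⟨p, hp, hpi⟩ := Finset.mem_image.mp hi
    have := (hmem_skew p).mp hp
    rw [← hpi]
    omega
  have hrange : ∀ p ∈ μ.cells \ ν.cells, a ≤ p.1 ∧ p.1 ≤ b := by
    intro p hp
    have hpi : p.1 ∈ rows := Finset.mem_image_of_mem _ hp
    exact ⟨rows.min'_le _ hpi, rows.le_max' _ hpi⟩
  have hab : a ≤ b := rows.min'_le _ (rows.max'_mem hrne)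
  have hFa : ν.rowLen a < μ.rowLen a := hrowlt _ (rows.min'_mem hrne)
  have hFb : ν.rowLen b < μ.rowLen b := hrowlt _ (rows.max'_mem hrne)
  -- crossing between consecutive rows
  have hcross : ∀ i, a ≤ i → i < b → ∃ j, (i, j) ∈ μ.cells \ ν.cells ∧
      (i + 1, j) ∈ μ.cells \ ν.cells := by
    intro i hai hib
    obtain ⟨pa, hpa, hpa1⟩ := Finset.mem_image.mp (rows.min'_mem hrne)
    obtain ⟨pb, hpb, hpb1⟩ := Finset.mem_image.mp (rows.max'_mem hrne)
    have hpath := hconn pa ((hSiff pa).mpr hpa) pb ((hSiff pb).mpr hpb)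
    obtain ⟨j, hj1, hj2⟩ := path_cross hpath i (by omega) (by omega)
    exact ⟨j, (hSiff _).mp hj1, (hSiff _).mp hj2⟩
  -- F2 : consecutive rows overlap in exactly one column
  have hF2 : ∀ i, a ≤ i → i < b → ν.rowLen i + 1 = μ.rowLen (i + 1) := by
    intro i hai hib
    obtain ⟨j, hj1, hj2⟩ := hcross i hai hib
    rw [hmem_skew] at hj1 hj2
    dsimp only at hj1 hj2
    have hmon1 : μ.rowLen (i + 1) ≤ μ.rowLen i := μ.rowLen_anti i (i + 1) (by omega)
    have hmon2 : ν.rowLen (i + 1) ≤ ν.rowLen i := ν.rowLen_anti i (i + 1) (by omega)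
    by_contra hc
    have hlt : ν.rowLen i + 1 < μ.rowLen (i + 1) := by omega
    apply h2x2 i (ν.rowLen i)
    refine ⟨(hmem_skew _).mpr ?_, (hmem_skew _).mpr ?_, (hmem_skew _).mpr ?_,
      (hmem_skew _).mpr ?_⟩ <;> dsimp only <;> omega
  have hF3 : ∀ i, (i < a ∨ b < i) → ν.rowLen i = μ.rowLen i := by
    intro i hi
    have hnl : ¬ ν.rowLen i < μ.rowLen i := by
      intro hc
      have hm : (i, ν.rowLen i) ∈ μ.cells \ ν.cells :=
        (hmem_skew _).mpr ⟨le_refl _, hc⟩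
      have := hrange _ hm
      dsimp only at this
      omega
    have := hmn i
    omega
  -- cardinality decomposition
  have hskdec : μ.cells \ ν.cells = (Finset.Icc a b).biUnion
      (fun i => {i} ×ˢ Finset.Ico (ν.rowLen i) (μ.rowLen i)) := by
    ext p
    simp only [Finset.mem_biUnion, Finset.mem_Icc, Finset.mem_product, Finset.mem_singleton,
      Finset.mem_Ico]
    constructor
    · intro hp
      have h1 := hrange p hp
      have h2 := (hmem_skew p).mp hp
      exact ⟨p.1, ⟨h1.1, h1.2⟩, rfl, h2.1, h2.2⟩
    · rintro ⟨i, ⟨hia, hib⟩, hp1, hp2, hp3⟩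
      refine (hmem_skew p).mpr ?_
      rw [hp1]
      exact ⟨hp2, hp3⟩
  have hcard2 : ∑ i ∈ Finset.Icc a b, (μ.rowLen i - ν.rowLen i) = r := by
    rw [hskdec] at hcard
    rw [Finset.card_biUnion] at hcard
    · rw [← hcard]
      apply Finset.sum_congr rfl
      intro i _
      rw [Finset.card_product, Finset.card_singleton, Nat.card_Ico, one_mul]
    · intro i _ j _ hij
      rw [Function.onFun, Finset.disjoint_left]
      rintro ⟨p1, p2⟩ hp hq
      simp only [Finset.mem_product, Finset.mem_singleton] at hp hq
      exact hij (hp.1.symm.trans hq.1)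
  have hsum : ((r : ℤ)) = ∑ i ∈ Finset.Icc a b, ((μ.rowLen i : ℤ) - (ν.rowLen i : ℤ)) := by
    rw [← hcard2]
    push_cast [Nat.cast_sub]
    apply Finset.sum_congr rfl
    intro i _
    rw [Nat.cast_sub (hmn i)]
  have htel := telescope (fun i => (μ.rowLen i : ℤ)) (fun i => (ν.rowLen i : ℤ)) a b hab
    (fun i h1 h2 => by
      have := hF2 i h1 h2
      push_cast
      omega)
  set s : ℤ := beta μ a with hs
  have hkey : beta ν b = s - r := by
    rw [htel] at hsum
    show (ν.rowLen b : ℤ) - (b + 1) = ((μ.rowLen a : ℤ) - (a + 1)) - r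
    omega
  have hbeta_nu : ∀ i, a ≤ i → i < b → beta ν i = beta μ (i + 1) := by
    intro i h1 h2
    have := hF2 i h1 h2
    unfold beta
    push_cast
    omega
  have hbeta_eq : ∀ i, (i < a ∨ b < i) → beta ν i = beta μ i := by
    intro i hi
    have := hF3 i hi
    unfold beta
    omega
  have hsaμ := beta_strictAnti μ
  have hsaν := beta_strictAnti ν
  have hs_not : s - r ∉ betaSet μ := by
    rintro ⟨j, hj0⟩
    have hj : s - (r:ℤ) = beta μ j := hj0
    have h1 : beta ν b < beta μ b := by
      unfold beta
      push_cast
      omega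
    have h2 : beta μ (b + 1) < beta ν b := by
      have h3 : beta ν (b + 1) < beta ν b := hsaν (by omega)
      have h4 := hbeta_eq (b + 1) (Or.inr (by omega))
      omega
    have hj1 : b < j := by
      have : beta μ j < beta μ b := by rw [← hj]; omega
      exact (StrictAnti.lt_iff_gt hsaμ).mp this
    have hj2 : j < b + 1 := by
      have : beta μ (b + 1) < beta μ j := by rw [← hj]; omega
      exact (StrictAnti.lt_iff_gt hsaμ).mp this
    omega
  refine ⟨s, beta_mem μ a, hs_not, ?_⟩
  ext n
  simp only [Set.mem_insert_iff, Set.mem_diff, Set.mem_singleton_iff]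
  rw [mem_betaSet, mem_betaSet]
  constructor
  · rintro ⟨i, rfl⟩
    by_cases hib : i = b
    · left
      rw [hib, hkey]
    · rcases lt_or_ge i a with hia | hia
      · right
        rw [hbeta_eq i (Or.inl hia)]
        exact ⟨⟨i, rfl⟩, fun hc => absurd (hsaμ.injective hc) (by omega)⟩
      · rcases lt_or_ge i b with hib2 | hib2
        · right
          rw [hbeta_nu i hia hib2]
          exact ⟨⟨i + 1, rfl⟩, fun hc => absurd (hsaμ.injective hc) (by omega)⟩
        · right
          rw [hbeta_eq i (Or.inr (by omega))]
          exact ⟨⟨i, rfl⟩, fun hc => absurd (hsaμ.injective hc) (by omega)⟩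
  · rintro (rfl | ⟨⟨j, rfl⟩, hne⟩)
    · exact ⟨b, hkey.symm⟩
    · have hja : j ≠ a := fun hc => hne (by rw [hc])
      rcases lt_or_ge j a with hja2 | hja2
      · exact ⟨j, (hbeta_eq j (Or.inl hja2)).symm⟩
      · rcases le_or_gt j b with hjb | hjb
        · refine ⟨j - 1, ?_⟩
          have hj1 : a ≤ j - 1 := by omega
          have hj2 : j - 1 < b := by omega
          rw [hbeta_nu (j - 1) hj1 hj2]
          congr 1
          omega
        · exact ⟨j, (hbeta_eq j (Or.inr hjb)).symm⟩

lemma core_beta_closed {r : ℕ} (hr : 1 ≤ r) {c : YoungDiagram} (hcore : IsRCore r c) :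
    ∀ s ∈ betaSet c, s - r ∈ betaSet c := by
  intro s hsmem
  by_contra hs'
  obtain ⟨a, hsa⟩ := hsmem
  have hsa : s = beta c a := hsa
  set m : ℕ → ℕ := c.rowLen with hm
  have hbeta : ∀ i, beta c i = (m i : ℤ) - (i + 1) := fun i => rfl
  have hanti : ∀ i j, i ≤ j → m j ≤ m i := fun i j hij => c.rowLen_anti i j hij
  have hsac := beta_strictAnti c
  -- find b
  have hex : ∃ i, beta c (i + 1) ≤ s - r := by
    refine ⟨((m 0 : ℤ) - (s - r)).toNat, ?_⟩
    have h1 : ((m 0 : ℤ) - (s - r)) ≤ (((m 0 : ℤ) - (s - r)).toNat : ℤ) := Int.self_le_toNat _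
    have h2 : m (((m 0 : ℤ) - (s - r)).toNat + 1) ≤ m 0 := hanti _ _ (by omega)
    rw [hbeta]
    push_cast
    omega
  set b := Nat.find hex with hbdef
  have hb2 : beta c (b + 1) ≤ s - r := Nat.find_spec hex
  have hb2' : beta c (b + 1) < s - r := by
    rcases lt_or_eq_of_le hb2 with h | h
    · exact h
    · exact absurd (h ▸ beta_mem c (b + 1)) hs'
  have hb1 : s - r < beta c b := by
    rcases Nat.eq_zero_or_pos b with hb0 | hb0
    · have h1 : beta c a ≤ beta c 0 := hsac.antitone (Nat.zero_le a)
      have hr0 : (0 : ℤ) < r := by exact_mod_cast hr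
      rw [hb0]
      omega
    · have h2 := Nat.find_min hex (show b - 1 < Nat.find hex from by omega)
      have h3 : b - 1 + 1 = b := by omega
      rw [h3] at h2
      omega
  have hab : a ≤ b := by
    by_contra hc
    have h1 : beta c a ≤ beta c (b + 1) := hsac.antitone (by omega)
    have hr0 : (0 : ℤ) < r := by exact_mod_cast hr
    omega
  have hr0 : (0 : ℤ) < r := by exact_mod_cast hr
  -- basic quantities
  have hbetab : beta c b = (m b : ℤ) - (b + 1) := rfl
  have hbetab1 : beta c (b + 1) = (m (b + 1) : ℤ) - (b + 2) := rfl
  have hmb : m (b + 1) + 1 ≤ m b := by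
    have : beta c (b + 1) + 2 ≤ beta c b := by omega
    rw [hbetab, hbetab1] at this
    omega
  have hm1 : ∀ i, i ≤ b → 1 ≤ m i := fun i hi => le_trans (by omega) (hanti i b hi)
  have hsr_ge : 0 ≤ s - r + b + 1 := by rw [hbetab1] at hb2'; omega
  -- the new row-length function
  set g : ℕ → ℕ := fun i => if i < a then m i else if i < b then m (i + 1) - 1
    else if i = b then (s - r + b + 1).toNat else m i with hg
  have hga : ∀ i, i < a → g i = m i := by
    intro i hi
    rw [hg]
    simp only [if_pos hi]
  have hgmid : ∀ i, a ≤ i → i < b → g i = m (i + 1) - 1 := by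
    intro i h1 h2
    rw [hg]
    simp only [if_neg (by omega : ¬ i < a), if_pos h2]
  have hgb : (g b : ℤ) = s - r + b + 1 := by
    have h0 : g b = (s - r + b + 1).toNat := by
      rw [hg]
      simp only [if_neg (by omega : ¬ b < a), if_neg (lt_irrefl b), if_pos rfl, if_true]
    rw [h0, Int.toNat_of_nonneg hsr_ge]
  have hgtop : ∀ i, b < i → g i = m i := by
    intro i hi
    rw [hg]
    simp only [if_neg (by omega : ¬ i < a), if_neg (by omega : ¬ i < b),
      if_neg (by omega : ¬ i = b)]
  have hsma : (m a : ℤ) = s + a + 1 := by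
    have : s = (m a : ℤ) - (a + 1) := hsa
    omega
  have hgm : ∀ i, g i ≤ m i := by
    intro i
    rcases lt_or_ge i a with h1 | h1
    · rw [hga i h1]
    · rcases lt_or_ge i b with h2 | h2
      · rw [hgmid i h1 h2]
        have := hanti i (i + 1) (by omega)
        omega
      · rcases eq_or_lt_of_le h2 with h3 | h3
        · have h4 : (g b : ℤ) ≤ (m b : ℤ) := by
            rw [hgb]
            rw [hbetab] at hb1
            omega
          rw [← h3]
          exact_mod_cast h4
        · rw [hgtop i h3]
  have hglt : ∀ i, a ≤ i → i ≤ b → g i < m i := by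
    intro i h1 h2
    rcases lt_or_ge i b with h3 | h3
    · rw [hgmid i h1 h3]
      have h4 := hanti (i + 1) b (by omega)
      have h5 := hanti i (i + 1) (by omega)
      have := hm1 (i + 1) (by omega)
      omega
    · have hib : i = b := by omega
      have h4 : (g b : ℤ) < (m b : ℤ) := by
        rw [hgb]
        rw [hbetab] at hb1
        omega
      rw [hib]
      exact_mod_cast h4
  have hganti : Antitone g := by
    apply antitone_nat_of_succ_le
    intro i
    rcases lt_or_ge i a with h1 | h1
    · rw [hga i h1]
      exact le_trans (hgm (i + 1)) (hanti i (i + 1) (by omega))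
    · rcases lt_or_ge (i + 1) b with h2 | h2
      · rw [hgmid i h1 (by omega), hgmid (i + 1) (by omega) h2]
        have := hanti (i + 1) (i + 1 + 1) (by omega)
        omega
      · rcases lt_or_ge i b with h3 | h3
        · -- i + 1 = b
          have hib : i + 1 = b := by omega
          rw [hgmid i h1 h3, hib]
          have h4 : (g b : ℤ) ≤ (m b : ℤ) - 1 := by rw [hgb]; rw [hbetab] at hb1; omega
          have h5 : 1 ≤ m b := hm1 b (le_refl b)
          have : g b ≤ m b - 1 := by omega
          omega
        · rcases eq_or_lt_of_le h3 with h4 | h4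
          · -- b = i
            have hgi1 : g (i + 1) = m (i + 1) := hgtop (i + 1) (by omega)
            have h5 : (m (b + 1) : ℤ) ≤ (g b : ℤ) := by
              rw [hgb]
              rw [hbetab1] at hb2'
              omega
            have h6 : m (b + 1) ≤ g b := by exact_mod_cast h5
            rw [hgi1, ← h4]
            exact h6
          · rw [hgtop i h4, hgtop (i + 1) (by omega)]
            exact hanti i (i + 1) (by omega)
  -- the new diagram
  set ν : YoungDiagram := ⟨c.cells.filter (fun x => x.2 < g x.1), by
    intro p q hpq hq
    rw [Finset.mem_coe, Finset.mem_filter] at hq ⊢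
    refine ⟨Finset.mem_coe.mp (c.isLowerSet hpq (Finset.mem_coe.mpr hq.1)), ?_⟩
    exact lt_of_le_of_lt hpq.2 (lt_of_lt_of_le hq.2 (hganti hpq.1))⟩ with hν
  have hνcells : ν.cells = c.cells.filter (fun x => x.2 < g x.1) := rfl
  have hν_mem : ∀ i j : ℕ, ((i, j) ∈ ν.cells ↔ j < g i) := by
    intro i j
    rw [hνcells, Finset.mem_filter]
    constructor
    · exact fun h => h.2
    · intro hj
      refine ⟨?_, hj⟩
      rw [YoungDiagram.mem_cells, YoungDiagram.mem_iff_lt_rowLen]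
      exact lt_of_lt_of_le hj (hgm i)
  have hνrow : ∀ i, ν.rowLen i = g i := by
    intro i
    have h1 : ¬ (g i < ν.rowLen i) := by
      intro hlt
      have h2 : (i, g i) ∈ ν.cells := (YoungDiagram.mem_cells _).mpr
        (YoungDiagram.mem_iff_lt_rowLen.mpr hlt)
      have := (hν_mem i (g i)).mp h2
      omega
    have h2 : ¬ (ν.rowLen i < g i) := by
      intro hlt
      have h3 := (hν_mem i (ν.rowLen i)).mpr hlt
      have := YoungDiagram.mem_iff_lt_rowLen.mp ((YoungDiagram.mem_cells _).mp h3)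
      omega
    omega
  have hsk : ∀ i j : ℕ, ((i, j) ∈ c.cells \ ν.cells ↔ g i ≤ j ∧ j < m i) := by
    intro i j
    rw [Finset.mem_sdiff, hν_mem, YoungDiagram.mem_cells, YoungDiagram.mem_iff_lt_rowLen]
    have hmr : c.rowLen i = m i := by rw [hm]
    omega
  have hrows_range : ∀ i j : ℕ, (i, j) ∈ c.cells \ ν.cells → a ≤ i ∧ i ≤ b := by
    intro i j hij
    rw [hsk] at hij
    constructor
    · by_contra hc
      rw [hga i (by omega)] at hij
      omega
    · by_contra hc
      rw [hgtop i (by omega)] at hij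
      omega
  -- cardinality
  have hskdec : c.cells \ ν.cells = (Finset.Icc a b).biUnion
      (fun i => {i} ×ˢ Finset.Ico (g i) (m i)) := by
    ext ⟨i, j⟩
    simp only [Finset.mem_biUnion, Finset.mem_Icc, Finset.mem_product, Finset.mem_singleton,
      Finset.mem_Ico]
    constructor
    · intro hp
      have h1 := hrows_range i j hp
      have h2 := (hsk i j).mp hp
      exact ⟨i, h1, rfl, h2⟩
    · rintro ⟨i', hi', h1, h2, h3⟩
      subst h1
      exact (hsk i j).mpr ⟨h2, h3⟩
  have hcard : (c.cells \ ν.cells).card = r := by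
    rw [hskdec, Finset.card_biUnion]
    · have hcast : ((∑ i ∈ Finset.Icc a b, ({i} ×ˢ Finset.Ico (g i) (m i)).card : ℕ) : ℤ) = r := by
        push_cast
        have : ∀ i ∈ Finset.Icc a b, (({i} ×ˢ Finset.Ico (g i) (m i)).card : ℤ)
            = (m i : ℤ) - (g i : ℤ) := by
          intro i hi
          rw [Finset.card_product, Finset.card_singleton, Nat.card_Ico, one_mul]
          rw [Finset.mem_Icc] at hi
          have := hgm i
          push_cast [Nat.cast_sub this]
          ring
        rw [Finset.sum_congr rfl this]
        rw [telescope (fun i => (m i : ℤ)) (fun i => (g i : ℤ)) a b hab]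
        · rw [hsma, hgb]; ring
        · intro i h1 h2
          rw [hgmid i h1 h2]
          have := hm1 (i + 1) (by omega)
          push_cast [Nat.cast_sub this]
          ring
      exact_mod_cast hcast
    · intro i _ j _ hij
      rw [Function.onFun, Finset.disjoint_left]
      rintro ⟨p1, p2⟩ hp hq
      simp only [Finset.mem_product, Finset.mem_singleton] at hp hq
      exact hij (hp.1.symm.trans hq.1)
  -- connectivity
  set S : Set (ℕ × ℕ) := (c.cells : Set (ℕ × ℕ)) \ (ν.cells : Set (ℕ × ℕ)) with hSdef
  have hS : ∀ p : ℕ × ℕ, p ∈ S ↔ g p.1 ≤ p.2 ∧ p.2 < m p.1 := by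
    rintro ⟨i, j⟩
    rw [hSdef]
    have : ((i, j) ∈ (c.cells : Set (ℕ × ℕ)) \ (ν.cells : Set (ℕ × ℕ))) ↔
        (i, j) ∈ c.cells \ ν.cells := by
      rw [Finset.mem_sdiff]; exact Iff.rfl
    rw [this, hsk]
  set Rl : (ℕ × ℕ) → (ℕ × ℕ) → Prop := fun x y => Adj x y ∧ x ∈ S ∧ y ∈ S with hRl
  have hRsym : Symmetric Rl := by
    rintro x y ⟨h1, h2, h3⟩
    exact ⟨adj_symm h1, h3, h2⟩
  have hrtgsym : Symmetric (Relation.ReflTransGen Rl) := by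
    haveI : Std.Symm Rl := ⟨hRsym⟩
    exact fun x y h => Std.Symm.symm (r := Relation.ReflTransGen Rl) x y h
  have hclaim : ∀ i j j', g i ≤ j → j ≤ j' → j' < m i →
      Relation.ReflTransGen Rl (i, j) (i, j') := by
    intro i j j' hj hjj' hj'
    induction j', hjj' using Nat.le_induction with
    | base => exact Relation.ReflTransGen.refl
    | succ k hk ih =>
      refine Relation.ReflTransGen.tail (ih (by omega)) ?_
      refine ⟨Or.inl ⟨rfl, Or.inl rfl⟩, ?_, ?_⟩
      · rw [hS]; dsimp only; omega
      · rw [hS]; dsimp only; omega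
  have hhoriz : ∀ i j j', g i ≤ j → j < m i → g i ≤ j' → j' < m i →
      Relation.ReflTransGen Rl (i, j) (i, j') := by
    intro i j j' h1 h2 h3 h4
    rcases le_total j j' with h | h
    · exact hclaim i j j' h1 h h4
    · exact hrtgsym (hclaim i j' j h3 h h2)
  have hanchor : ∀ d i, a ≤ i → i + d = b →
      Relation.ReflTransGen Rl (i, g i) (b, g b) := by
    intro d
    induction d with
    | zero =>
      intro i h1 h2
      have : i = b := by omega
      rw [this]
    | succ k ih =>
      intro i h1 h2
      have hib : i < b := by omega
      have hgi : g i = m (i + 1) - 1 := hgmid i h1 hib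
      have h3 : (i, g i) ∈ S := by rw [hS]; exact ⟨le_refl _, hglt i h1 (by omega)⟩
      have hm1' := hm1 (i + 1) (by omega)
      have h4 : (i + 1, g i) ∈ S := by
        rw [hS]
        refine ⟨hganti (by omega), ?_⟩
        dsimp only
        omega
      have step1 : Relation.ReflTransGen Rl (i, g i) (i + 1, g i) :=
        Relation.ReflTransGen.single ⟨Or.inr ⟨rfl, Or.inl rfl⟩, h3, h4⟩
      have step2 : Relation.ReflTransGen Rl (i + 1, g i) (i + 1, g (i + 1)) := by
        apply hhoriz (i + 1) (g i) (g (i + 1)) (hganti (by omega)) _ (le_refl _)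
          (hglt (i + 1) (by omega) (by omega))
        omega
      exact (step1.trans step2).trans (ih (i + 1) (by omega) (by omega))
  have hconn : ConnectedCells S := by
    rintro ⟨x1, x2⟩ hx ⟨y1, y2⟩ hy
    have hx' := (hS _).mp hx
    have hy' := (hS _).mp hy
    dsimp only at hx' hy'
    have hxr := hrows_range x1 x2 ((hsk x1 x2).mpr hx')
    have hyr := hrows_range y1 y2 ((hsk y1 y2).mpr hy')
    have px : Relation.ReflTransGen Rl (x1, x2) (b, g b) := by
      refine Relation.ReflTransGen.trans
        (hhoriz x1 x2 (g x1) hx'.1 hx'.2 (le_refl _) (hglt x1 hxr.1 hxr.2)) ?_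
      exact hanchor (b - x1) x1 hxr.1 (by omega)
    have py : Relation.ReflTransGen Rl (y1, y2) (b, g b) := by
      refine Relation.ReflTransGen.trans
        (hhoriz y1 y2 (g y1) hy'.1 hy'.2 (le_refl _) (hglt y1 hyr.1 hyr.2)) ?_
      exact hanchor (b - y1) y1 hyr.1 (by omega)
    exact px.trans (hrtgsym py)
  -- no 2x2
  have h2x2 : ∀ i j : ℕ, ¬ ((i, j) ∈ c.cells \ ν.cells ∧ (i + 1, j) ∈ c.cells \ ν.cells ∧
      (i, j + 1) ∈ c.cells \ ν.cells ∧ (i + 1, j + 1) ∈ c.cells \ ν.cells) := by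
    rintro i j ⟨c1, c2, c3, c4⟩
    have h1 := hrows_range i j c1
    have h2 := hrows_range (i + 1) j c2
    have hgi : g i = m (i + 1) - 1 := hgmid i h1.1 (by omega)
    rw [hsk] at c1 c4
    have hm1' := hm1 (i + 1) (by omega)
    omega
  exact hcore ν ⟨Finset.filter_subset _ _, hcard, hconn, h2x2⟩

lemma core_quot_zero {r : ℕ} (hr : 1 ≤ r) {c : YoungDiagram} (hcore : IsRCore r c) :
    quotTotal r c = 0 := by
  rw [quotTotal_eq]
  convert Set.ncard_empty (ℤ × ℤ)
  rw [Set.eq_empty_iff_forall_notMem]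
  rintro ⟨x, y⟩ ⟨hx, hy, hlt, hdvd⟩
  have hclosed := core_beta_closed hr hcore
  have hall : ∀ k : ℕ, x - k * r ∈ betaSet c := by
    intro k
    induction k with
    | zero => simpa using hx
    | succ k ih =>
      have h1 := hclosed _ ih
      have h2 : x - (k + 1 : ℕ) * r = (x - k * r) - r := by push_cast; ring
      rw [h2]
      exact h1
  have hr0 : (0 : ℤ) < r := by exact_mod_cast hr
  obtain ⟨t, ht⟩ := hdvd
  have ht0 : 0 < t := by nlinarith
  have hy2 : y = x - (t.toNat : ℕ) * r := by
    push_cast [Int.toNat_of_nonneg (le_of_lt ht0)]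
    linear_combination -ht
  exact hy (hy2 ▸ hall t.toNat)

lemma ribbon_colors {r : ℕ} (hr : 1 ≤ r) {μ ν : YoungDiagram} (hrib : IsRibbonOf r μ ν)
    (i : ZMod r) :
    {x : ℕ × ℕ | x ∈ μ ∧ x ∉ ν ∧ cellColor r x = i}.ncard = 1 := by
  haveI : NeZero r := ⟨by omega⟩
  have hr0 : (0 : ℤ) < r := by exact_mod_cast hr
  obtain ⟨hsub, hcard, hconn, h2x2⟩ := hrib
  have hmn : ∀ k, ν.rowLen k ≤ μ.rowLen k := by
    intro k
    by_contra hc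
    have h1 : (k, μ.rowLen k) ∈ ν := YoungDiagram.mem_iff_lt_rowLen.mpr (by omega)
    have h2 : (k, μ.rowLen k) ∈ μ.cells := hsub (by simpa using h1)
    have h3 : (k, μ.rowLen k) ∈ μ := by simpa using h2
    have := YoungDiagram.mem_iff_lt_rowLen.mp h3
    omega
  have hmem_skew : ∀ p : ℕ × ℕ, p ∈ μ.cells \ ν.cells ↔
      ν.rowLen p.1 ≤ p.2 ∧ p.2 < μ.rowLen p.1 := by
    rintro ⟨k, j⟩
    dsimp only
    rw [Finset.mem_sdiff, YoungDiagram.mem_cells, YoungDiagram.mem_cells,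
      YoungDiagram.mem_iff_lt_rowLen, YoungDiagram.mem_iff_lt_rowLen]
    omega
  have hSiff : ∀ p : ℕ × ℕ,
      p ∈ ((μ.cells : Set (ℕ × ℕ)) \ (ν.cells : Set (ℕ × ℕ))) ↔ p ∈ μ.cells \ ν.cells := by
    intro p
    rw [Finset.mem_sdiff]
    exact Iff.rfl
  -- injectivity of content on the skew shape
  have haux : ∀ p q : ℕ × ℕ, p ∈ μ.cells \ ν.cells → q ∈ μ.cells \ ν.cells →
      ct p = ct q → p.1 ≤ q.1 → p = q := by
    rintro ⟨p1, p2⟩ ⟨q1, q2⟩ hp hq hct hle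
    rw [hmem_skew] at hp hq
    dsimp only at hp hq hle ⊢
    unfold ct at hct
    dsimp only at hct
    rcases eq_or_lt_of_le hle with heq | hlt
    · have : p2 = q2 := by omega
      subst heq
      subst this
      rfl
    · exfalso
      have hq2 : q2 = p2 + (q1 - p1) := by omega
      have ha1 : μ.rowLen q1 ≤ μ.rowLen (p1 + 1) := μ.rowLen_anti _ _ (by omega)
      have ha2 : μ.rowLen (p1 + 1) ≤ μ.rowLen p1 := μ.rowLen_anti _ _ (by omega)
      have ha3 : ν.rowLen (p1 + 1) ≤ ν.rowLen p1 := ν.rowLen_anti _ _ (by omega)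
      apply h2x2 p1 p2
      refine ⟨(hmem_skew _).mpr ?_, (hmem_skew _).mpr ?_, (hmem_skew _).mpr ?_,
        (hmem_skew _).mpr ?_⟩ <;> dsimp only <;> omega
  have hinj : ∀ p q : ℕ × ℕ, p ∈ μ.cells \ ν.cells → q ∈ μ.cells \ ν.cells →
      ct p = ct q → p = q := by
    intro p q hp hq hct
    rcases le_total p.1 q.1 with h | h
    · exact haux p q hp hq hct h
    · exact (haux q p hq hp hct.symm h).symm
  -- the image of the content map
  have hisk : (μ.cells \ ν.cells).Nonempty := by
    rw [← Finset.card_pos, hcard]; omega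
  have him : ((μ.cells \ ν.cells).image ct).card = r := by
    rw [Finset.card_image_of_injOn (fun p hp q hq h => hinj p q hp hq h), hcard]
  have himne : ((μ.cells \ ν.cells).image ct).Nonempty := hisk.image _
  set M1 := ((μ.cells \ ν.cells).image ct).min' himne with hM1
  set M2 := ((μ.cells \ ν.cells).image ct).max' himne with hM2
  have hM12 : M1 ≤ M2 := Finset.min'_le _ _ (Finset.max'_mem _ _)
  have hint : ∀ z : ℤ, M1 ≤ z → z ≤ M2 → z ∈ (μ.cells \ ν.cells).image ct := by
    intro z h1 h2
    obtain ⟨pm, hpm, hpmct⟩ := Finset.mem_image.mp (Finset.min'_mem _ himne)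
    obtain ⟨pM, hpM, hpMct⟩ := Finset.mem_image.mp (Finset.max'_mem _ himne)
    have hpath := hconn pm ((hSiff pm).mpr hpm) pM ((hSiff pM).mpr hpM)
    obtain ⟨w, hw, hwct⟩ := path_ivt ((hSiff pm).mpr hpm) hpath z
      (by rw [hpmct, hpMct]; omega) (by rw [hpmct, hpMct]; omega)
    exact Finset.mem_image.mpr ⟨w, (hSiff w).mp hw, hwct⟩
  have hIcc : (μ.cells \ ν.cells).image ct = Finset.Icc M1 M2 := by
    apply Finset.Subset.antisymm
    · intro z hz
      rw [Finset.mem_Icc]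
      exact ⟨Finset.min'_le _ _ hz, Finset.le_max' _ _ hz⟩
    · intro z hz
      rw [Finset.mem_Icc] at hz
      exact hint z hz.1 hz.2
  have hM2eq : M2 = M1 + r - 1 := by
    have := him
    rw [hIcc, Int.card_Icc] at this
    omega
  -- the target content
  set w : ℤ := (i.val : ℤ) with hw
  have hiw : ((w : ℤ) : ZMod r) = i := by
    rw [hw]
    push_cast
    exact ZMod.natCast_rightInverse i
  set z0 : ℤ := M1 + (w - M1) % r with hz0
  have hz0b : M1 ≤ z0 ∧ z0 ≤ M2 := by
    have h1 := Int.emod_nonneg (w - M1) (by omega : (r:ℤ) ≠ 0)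
    have h2 := Int.emod_lt_of_pos (w - M1) hr0
    omega
  have hz0d : (r : ℤ) ∣ z0 - w := by
    refine ⟨-((w - M1) / r), ?_⟩
    rw [hz0]
    rw [Int.emod_def]
    ring
  have hz0c : ((z0 : ℤ) : ZMod r) = i := by
    rw [← hiw]
    rw [ZMod.intCast_eq_intCast_iff]
    exact (Int.modEq_iff_dvd.mpr hz0d).symm
  obtain ⟨x0, hx0, hx0ct⟩ := Finset.mem_image.mp (hint z0 hz0b.1 hz0b.2)
  -- conclude
  have hcol : ∀ x : ℕ × ℕ, cellColor r x = ((ct x : ℤ) : ZMod r) := fun x => rfl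
  have hsingle : {x : ℕ × ℕ | x ∈ μ ∧ x ∉ ν ∧ cellColor r x = i} = {x0} := by
    ext x
    simp only [Set.mem_setOf_eq, Set.mem_singleton_iff]
    constructor
    · rintro ⟨h1, h2, h3⟩
      have hxsk : x ∈ μ.cells \ ν.cells := by
        rw [Finset.mem_sdiff, YoungDiagram.mem_cells, YoungDiagram.mem_cells]
        exact ⟨h1, h2⟩
      have hxim : ct x ∈ (μ.cells \ ν.cells).image ct := Finset.mem_image_of_mem _ hxsk
      rw [hIcc, Finset.mem_Icc] at hxim
      have hd : (r : ℤ) ∣ ct x - z0 := by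
        have : ((ct x : ℤ) : ZMod r) = ((z0 : ℤ) : ZMod r) := by
          rw [hz0c, ← h3, hcol]
        rw [ZMod.intCast_eq_intCast_iff] at this
        exact Int.ModEq.dvd this.symm
      have : ct x = z0 := by
        have := dvd_small hr0 hd (by omega) (by omega)
        omega
      exact hinj x x0 hxsk hx0 (this.trans hx0ct.symm)
    · rintro rfl
      rw [Finset.mem_sdiff, YoungDiagram.mem_cells, YoungDiagram.mem_cells] at hx0
      exact ⟨hx0.1, hx0.2, by rw [hcol, hx0ct, hz0c]⟩
  rw [hsingle, Set.ncard_singleton]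

lemma steps_subset {r : ℕ} {μ c : YoungDiagram}
    (h : Relation.ReflTransGen (fun a b => IsRibbonOf r a b) μ c) : c.cells ⊆ μ.cells := by
  induction h with
  | refl => exact subset_refl _
  | tail h1 h2 ih => exact subset_trans h2.1 ih

end RibbonAux

open RibbonAux in
/-- For every color `i`, the number of cells of color `i` in `λ / core_r(λ)`
equals the total size of the `r`-quotient of `λ` (in particular, it is
independent of `i`). -/
theorem skew_core_color_count (r : ℕ) (hr : 2 ≤ r) (μ c : YoungDiagram)
    (h : ReachesCore r μ c) (i : ZMod r) :
    {x : ℕ × ℕ | x ∈ μ ∧ x ∉ c ∧ cellColor r x = i}.ncard = quotTotal r μ := by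
  obtain ⟨hsteps, hcore⟩ := h
  induction hsteps using Relation.ReflTransGen.head_induction_on with
  | refl =>
    have h1 : {x : ℕ × ℕ | x ∈ c ∧ x ∉ c ∧ cellColor r x = i} = ∅ := by
      rw [Set.eq_empty_iff_forall_notMem]
      rintro x ⟨h1, h2, -⟩
      exact h2 h1
    rw [h1, Set.ncard_empty, core_quot_zero (by omega) hcore]
  | head hstep hrest ih =>
    rename_i μ₁ ν₁
    have hsub_c : c.cells ⊆ ν₁.cells := steps_subset hrest
    have hsplit : {x : ℕ × ℕ | x ∈ μ₁ ∧ x ∉ c ∧ cellColor r x = i} =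
        {x : ℕ × ℕ | x ∈ μ₁ ∧ x ∉ ν₁ ∧ cellColor r x = i} ∪
        {x : ℕ × ℕ | x ∈ ν₁ ∧ x ∉ c ∧ cellColor r x = i} := by
      ext x
      simp only [Set.mem_setOf_eq, Set.mem_union]
      constructor
      · rintro ⟨h1, h2, h3⟩
        by_cases hx : x ∈ ν₁
        · exact Or.inr ⟨hx, h2, h3⟩
        · exact Or.inl ⟨h1, hx, h3⟩
      · rintro (⟨h1, h2, h3⟩ | ⟨h1, h2, h3⟩)
        · refine ⟨h1, fun hc => h2 ?_, h3⟩
          exact (YoungDiagram.mem_cells _).mp (hsub_c ((YoungDiagram.mem_cells _).mpr hc))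
        · exact ⟨(YoungDiagram.mem_cells _).mp (hstep.1 ((YoungDiagram.mem_cells _).mpr h1)),
            h2, h3⟩
    have hdisj : Disjoint {x : ℕ × ℕ | x ∈ μ₁ ∧ x ∉ ν₁ ∧ cellColor r x = i}
        {x : ℕ × ℕ | x ∈ ν₁ ∧ x ∉ c ∧ cellColor r x = i} := by
      rw [Set.disjoint_left]
      rintro x ⟨-, h2, -⟩ ⟨h4, -, -⟩
      exact h2 h4
    have hfinA : {x : ℕ × ℕ | x ∈ μ₁ ∧ x ∉ ν₁ ∧ cellColor r x = i}.Finite := by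
      apply Set.Finite.subset μ₁.cells.finite_toSet
      rintro x ⟨h1, -, -⟩
      exact (YoungDiagram.mem_cells _).mpr h1
    have hfinB : {x : ℕ × ℕ | x ∈ ν₁ ∧ x ∉ c ∧ cellColor r x = i}.Finite := by
      apply Set.Finite.subset ν₁.cells.finite_toSet
      rintro x ⟨h1, -, -⟩
      exact (YoungDiagram.mem_cells _).mpr h1
    have hq : quotTotal r μ₁ = quotTotal r ν₁ + 1 := by
      obtain ⟨s, hs, hs', hset⟩ := ribbon_beta (by omega) hstep
      rw [quotTotal_eq, quotTotal_eq, hset]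
      exact Qstep (by omega) hs hs' (Qset_finite r μ₁)
    rw [hsplit, Set.ncard_union_eq hdisj hfinA hfinB,
      ribbon_colors (by omega) hstep i, ih, hq]
    omega
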